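/- For every q ∈ (0,1), every m ∈ ℕ, and all positive reals c_0, c_1, …, c_m: (1/(1−q)^{m+1}) · Σ over all strictly increasing (m+1)-tuples of natural numbers 0 ≤ j_0 < j_1 < … < j_m < ∞ of q^{c_0 j_0 + c_1 j_1 + … + c_m j_m} (1−q^{j_0+1})(1−q^{j_1−j_0})(1−q^{j_2−j_1})⋯(1−q^{j_m−j_{m−1}}) = q^{c_1 + 2c_2 + … + m·c_m} / [ (q^{c_0+c_1+…+c_m};q)_2 (q^{c_1+c_2+…+c_m};q)_2 ⋯ (q^{c_m};q)_2 ], with the series converging absolutely. -/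

import Mathlib

open scoped BigOperators

/-- The q-Pochhammer symbol `(x;q)_r = ∏_{i=0}^{r−1} (1 − q^i x)` (real version). -/
noncomputable def qPR (q x : ℝ) (r : ℕ) : ℝ := ∏ i ∈ Finset.range r, (1 - q ^ i * x)

/-- The summand of the left-hand side of Statement 14, for a strictly increasing tuple
`j_0 < j_1 < … < j_m`:
`q^{c_0 j_0+…+c_m j_m} (1−q^{j_0+1})(1−q^{j_1−j_0})(1−q^{j_2−j_1})⋯(1−q^{j_m−j_{m−1}})`. -/
noncomputable def lhsTerm14 (q : ℝ) (m : ℕ) (c : ℕ → ℝ) (j : Fin (m + 1) → ℕ) : ℝ :=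
  q ^ (∑ i : Fin (m + 1), c (i : ℕ) * (j i : ℝ)) * (1 - q ^ (j 0 + 1)) *
    ∏ i : Fin m, (1 - q ^ (j i.succ - j i.castSucc))

section Aux

lemma rpow_finset_sum {ι : Type*} (q : ℝ) (hq : 0 < q) (s : Finset ι) (f : ι → ℝ) :
    q ^ (∑ i ∈ s, f i) = ∏ i ∈ s, q ^ f i := by
  classical
  induction s using Finset.induction with
  | empty => simp
  | @insert a s h ih =>
      rw [Finset.sum_insert h, Finset.prod_insert h, Real.rpow_add hq, ih]

lemma geomAux {q : ℝ} (hq : q ∈ Set.Ioo (0:ℝ) 1) {x : ℝ} (hx0 : 0 < x) (hx1 : x < 1) :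
    Summable (fun k : ℕ => ‖x ^ k * (1 - q ^ (k + 1))‖) ∧
    ∑' k : ℕ, x ^ k * (1 - q ^ (k + 1)) = (1 - q) / ((1 - x) * (1 - q * x)) := by
  obtain ⟨hq0, hq1⟩ := hq
  have hxq0 : 0 ≤ x * q := by positivity
  have hxq1 : x * q < 1 := by nlinarith
  have hkey : ∀ k : ℕ, x ^ k * (1 - q ^ (k + 1)) = x ^ k - q * (x * q) ^ k := by
    intro k
    rw [mul_pow, pow_succ]
    ring
  have s1 : Summable (fun k : ℕ => x ^ k) := summable_geometric_of_lt_one hx0.le hx1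
  have s2 : Summable (fun k : ℕ => q * (x * q) ^ k) :=
    (summable_geometric_of_lt_one hxq0 hxq1).mul_left q
  have hs : Summable (fun k : ℕ => x ^ k * (1 - q ^ (k + 1))) := by
    simpa only [hkey] using s1.sub s2
  have hnonneg : ∀ k : ℕ, 0 ≤ x ^ k * (1 - q ^ (k + 1)) := by
    intro k
    have h := pow_le_one₀ hq0.le hq1.le (n := k + 1)
    have := pow_nonneg hx0.le k
    nlinarith
  refine ⟨by simpa only [Real.norm_eq_abs, abs_of_nonneg (hnonneg _)] using hs, ?_⟩
  have := calc ∑' k : ℕ, x ^ k * (1 - q ^ (k + 1))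
      = ∑' k : ℕ, (x ^ k - q * (x * q) ^ k) := by simp only [hkey]
    _ = (∑' k : ℕ, x ^ k) - ∑' k : ℕ, q * (x * q) ^ k := Summable.tsum_sub s1 s2
    _ = (1 - x)⁻¹ - q * (1 - x * q)⁻¹ := by
        rw [tsum_geometric_of_lt_one hx0.le hx1, tsum_mul_left,
          tsum_geometric_of_lt_one hxq0 hxq1]
  rw [this]
  have h1 : 1 - x ≠ 0 := by nlinarith
  have h2 : 1 - x * q ≠ 0 := by nlinarith
  have h3 : 1 - q * x ≠ 0 := by nlinarith
  field_simp
  ring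

lemma piAux : ∀ (n : ℕ) (f : Fin n → ℕ → ℝ),
    (∀ i, Summable (fun k => ‖f i k‖)) →
    Summable (fun k : Fin n → ℕ => ‖∏ i, f i (k i)‖) ∧
    ∑' k : Fin n → ℕ, ∏ i, f i (k i) = ∏ i, ∑' k : ℕ, f i k := by
  intro n
  induction n with
  | zero =>
      intro f _
      constructor
      · exact .of_finite
      · simp only [Finset.univ_eq_empty, Finset.prod_empty]
        exact tsum_eq_single (fun i => i.elim0) (fun b hb => absurd (Subsingleton.elim _ _) hb)
  | succ n ih =>
      intro f hf
      obtain ⟨S, T⟩ := ih (fun i => f i.succ) (fun i => hf i.succ)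
      set e := Fin.consEquiv (fun _ : Fin (n + 1) => ℕ) with he
      have key : ∀ z : ℕ × (Fin n → ℕ),
          (∏ i : Fin (n + 1), f i (e z i)) = f 0 z.1 * ∏ i : Fin n, f i.succ (z.2 i) := by
        intro z
        rw [Fin.prod_univ_succ]
        simp [he, Fin.consEquiv]
      have hprod : Summable (fun z : ℕ × (Fin n → ℕ) =>
          ‖f 0 z.1‖ * ‖∏ i : Fin n, f i.succ (z.2 i)‖) :=
        Summable.mul_of_nonneg (f := fun k : ℕ => ‖f 0 k‖)
          (g := fun k : Fin n → ℕ => ‖∏ i : Fin n, f i.succ (k i)‖) (hf 0) S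
          (fun _ => norm_nonneg _) (fun _ => norm_nonneg _)
      have hFnorm : Summable (fun z : ℕ × (Fin n → ℕ) => ‖∏ i : Fin (n + 1), f i (e z i)‖) := by
        refine hprod.congr fun z => ?_
        rw [key z, norm_mul]
      constructor
      · rw [← e.summable_iff]
        exact hFnorm
      · rw [← e.tsum_eq]
        calc ∑' z : ℕ × (Fin n → ℕ), ∏ i : Fin (n + 1), f i (e z i)
            = ∑' z : ℕ × (Fin n → ℕ), f 0 z.1 * ∏ i : Fin n, f i.succ (z.2 i) :=
              tsum_congr key
          _ = (∑' k : ℕ, f 0 k) * ∑' k : Fin n → ℕ, ∏ i : Fin n, f i.succ (k i) :=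
              (tsum_mul_tsum_of_summable_norm (hf 0) S).symm
          _ = ∏ i : Fin (n + 1), ∑' k : ℕ, f i k := by
              rw [T, Fin.prod_univ_succ]

variable {m : ℕ}

noncomputable def toMono (m : ℕ) (k : Fin (m + 1) → ℕ) : Fin (m + 1) → ℕ :=
  fun i => i + ∑ t ∈ Finset.Iic i, k t

lemma Iic_zero' : (Finset.Iic (0 : Fin (m + 1))) = {0} := by
  ext t
  simp only [Finset.mem_Iic, Finset.mem_singleton, Fin.le_def, Fin.ext_iff, Fin.val_zero]
  omega

lemma Iic_succ' (i : Fin m) :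
    (Finset.Iic (i.succ : Fin (m + 1))) = insert i.succ (Finset.Iic i.castSucc) := by
  ext t
  simp only [Finset.mem_Iic, Finset.mem_insert, Fin.le_def, Fin.ext_iff, Fin.val_succ,
    Fin.coe_castSucc]
  omega

lemma toMono_zero (k : Fin (m + 1) → ℕ) : toMono m k 0 = k 0 := by
  simp [toMono, Iic_zero']

lemma toMono_succ (k : Fin (m + 1) → ℕ) (i : Fin m) :
    toMono m k i.succ = toMono m k i.castSucc + k i.succ + 1 := by
  have hnot : (i.succ : Fin (m + 1)) ∉ Finset.Iic i.castSucc := by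
    simp [Fin.le_def]
  simp only [toMono, Iic_succ' i, Finset.sum_insert hnot, Fin.val_succ, Fin.coe_castSucc]
  ring

lemma toMono_strictMono (k : Fin (m + 1) → ℕ) : StrictMono (toMono m k) := by
  rw [Fin.strictMono_iff_lt_succ]
  intro i
  rw [toMono_succ]
  omega

noncomputable def fromMono (m : ℕ) (j : Fin (m + 1) → ℕ) : Fin (m + 1) → ℕ :=
  Fin.cases (j 0) (fun i => j i.succ - j i.castSucc - 1)

noncomputable def monoEquiv (m : ℕ) :
    (Fin (m + 1) → ℕ) ≃ {j : Fin (m + 1) → ℕ // StrictMono j} where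
  toFun k := ⟨toMono m k, toMono_strictMono k⟩
  invFun j := fromMono m j.1
  left_inv k := by
    funext i
    induction i using Fin.cases with
    | zero => simp [fromMono, toMono_zero]
    | succ i => simp only [fromMono, Fin.cases_succ, toMono_succ]; omega
  right_inv j := by
    obtain ⟨j, hj⟩ := j
    ext i
    simp only
    induction i using Fin.induction with
    | zero => simp [toMono_zero, fromMono]
    | succ i ih =>
        have hlt : j i.castSucc < j i.succ := hj (Fin.castSucc_lt_succ : i.castSucc < i.succ)
        rw [toMono_succ, ih]
        simp only [fromMono, Fin.cases_succ]
        omega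

end Aux

/-- For `q ∈ (0,1)`, `m ∈ ℕ`, positive reals `c_0, …, c_m`:
`(1/(1−q)^{m+1}) Σ_{0 ≤ j_0 < j_1 < … < j_m}
   q^{c_0 j_0+…+c_m j_m} (1−q^{j_0+1})(1−q^{j_1−j_0})⋯(1−q^{j_m−j_{m−1}})
 = q^{c_1+2c_2+…+m c_m} / [(q^{c_0+…+c_m};q)_2 (q^{c_1+…+c_m};q)_2 ⋯ (q^{c_m};q)_2]`,
with the series converging absolutely. -/
theorem statement14 (q : ℝ) (hq : q ∈ Set.Ioo (0 : ℝ) 1) (m : ℕ)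
    (c : ℕ → ℝ) (hc : ∀ i, i ≤ m → 0 < c i) :
    Summable (fun j : {j : Fin (m + 1) → ℕ // StrictMono j} => lhsTerm14 q m c j.1) ∧
    (1 / (1 - q) ^ (m + 1)) *
        ∑' j : {j : Fin (m + 1) → ℕ // StrictMono j}, lhsTerm14 q m c j.1
      = q ^ (∑ i ∈ Finset.range (m + 1), (i : ℝ) * c i) /
          ∏ i ∈ Finset.Icc 0 m, qPR q (q ^ (∑ t ∈ Finset.Icc i m, c t)) 2 := by
  obtain ⟨hq0, hq1⟩ := hq
  -- partial sums of the `c i`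
  set C : ℕ → ℝ := fun t => ∑ u ∈ Finset.Icc t m, c u with hC
  have hCpos : ∀ i : Fin (m + 1), 0 < C (i : ℕ) := by
    intro i
    refine Finset.sum_pos (fun u hu => hc u (Finset.mem_Icc.mp hu).2) ?_
    exact ⟨m, Finset.mem_Icc.mpr ⟨Nat.lt_succ_iff.mp i.isLt, le_rfl⟩⟩
  have hx0 : ∀ i : Fin (m + 1), 0 < q ^ C (i : ℕ) := fun i => Real.rpow_pos_of_pos hq0 _
  have hx1 : ∀ i : Fin (m + 1), q ^ C (i : ℕ) < 1 := fun i =>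
    Real.rpow_lt_one hq0.le hq1 (hCpos i)
  -- the one-variable factor
  set f : Fin (m + 1) → ℕ → ℝ :=
    fun i k => q ^ ((i : ℕ) * c i) * ((q ^ C (i : ℕ)) ^ k * (1 - q ^ (k + 1))) with hf
  -- relate `Ici` in `Fin (m+1)` with `Icc` in `ℕ`
  have hIci : ∀ t : Fin (m + 1), (∑ i ∈ Finset.Ici t, c (i : ℕ)) = C (t : ℕ) := by
    intro t
    rw [hC]
    refine Finset.sum_nbij' (fun i => (i : ℕ)) (fun u => ⟨min u m, by omega⟩)
      ?_ ?_ ?_ ?_ ?_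
    · intro i hi
      simp only [Finset.mem_Ici, Fin.le_def] at hi
      simp only [Finset.mem_Icc]
      exact ⟨hi, Nat.lt_succ_iff.mp i.isLt⟩
    · intro u hu
      simp only [Finset.mem_Icc] at hu
      simp only [Finset.mem_Ici, Fin.le_def]
      omega
    · intro i hi
      have := i.isLt
      simp only [Fin.ext_iff]
      omega
    · intro u hu
      simp only [Finset.mem_Icc] at hu
      simp only
      omega
    · intro i _
      rfl
  -- pointwise identity
  have hpoint : ∀ k : Fin (m + 1) → ℕ,
      lhsTerm14 q m c (toMono m k) = ∏ i : Fin (m + 1), f i (k i) := by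
    intro k
    have hgap : ∀ i : Fin m, toMono m k i.succ - toMono m k i.castSucc = k i.succ + 1 := by
      intro i
      rw [toMono_succ]
      omega
    have hcast : ∀ i : Fin (m + 1),
        ((toMono m k i : ℕ) : ℝ) = (i : ℕ) + ∑ t ∈ Finset.Iic i, (k t : ℝ) := by
      intro i
      simp only [toMono, Nat.cast_add, Nat.cast_sum]
    have hE : (∑ i : Fin (m + 1), c (i : ℕ) * ((toMono m k i : ℕ) : ℝ))
        = (∑ i : Fin (m + 1), (i : ℕ) * c (i : ℕ))
          + ∑ t : Fin (m + 1), C (t : ℕ) * (k t : ℝ) := by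
      have swap : (∑ i : Fin (m + 1), ∑ t ∈ Finset.Iic i, c (i : ℕ) * (k t : ℝ))
          = ∑ t : Fin (m + 1), ∑ i ∈ Finset.Ici t, c (i : ℕ) * (k t : ℝ) :=
        Finset.sum_comm' (fun i t => by
          simp [Finset.mem_Iic, Finset.mem_Ici])
      calc (∑ i : Fin (m + 1), c (i : ℕ) * ((toMono m k i : ℕ) : ℝ))
          = ∑ i : Fin (m + 1),
              (c (i : ℕ) * (i : ℕ) + ∑ t ∈ Finset.Iic i, c (i : ℕ) * (k t : ℝ)) := by
            refine Finset.sum_congr rfl fun i _ => ?_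
            rw [hcast i, mul_add, Finset.mul_sum]
        _ = (∑ i : Fin (m + 1), (i : ℕ) * c (i : ℕ))
              + ∑ i : Fin (m + 1), ∑ t ∈ Finset.Iic i, c (i : ℕ) * (k t : ℝ) := by
            rw [Finset.sum_add_distrib]
            congr 1
            exact Finset.sum_congr rfl fun i _ => by ring
        _ = _ := by
            rw [swap]
            congr 1
            refine Finset.sum_congr rfl fun t _ => ?_
            rw [← Finset.sum_mul, hIci t]
    unfold lhsTerm14
    rw [hE, Real.rpow_add hq0, rpow_finset_sum q hq0, rpow_finset_sum q hq0]
    have h1 : ∀ t : Fin (m + 1), q ^ (C (t : ℕ) * (k t : ℝ)) = (q ^ C (t : ℕ)) ^ (k t) := by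
      intro t
      rw [Real.rpow_mul hq0.le, Real.rpow_natCast]
    have h2 : (1 - q ^ (toMono m k 0 + 1)) * ∏ i : Fin m,
        (1 - q ^ (toMono m k i.succ - toMono m k i.castSucc))
        = ∏ i : Fin (m + 1), (1 - q ^ (k i + 1)) := by
      rw [Fin.prod_univ_succ]
      congr 1
      · rw [toMono_zero]
      · exact Finset.prod_congr rfl fun i _ => by rw [hgap i]
    calc (∏ i : Fin (m + 1), q ^ ((i : ℕ) * c (i : ℕ)))
          * (∏ t : Fin (m + 1), q ^ (C (t : ℕ) * (k t : ℝ)))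
          * (1 - q ^ (toMono m k 0 + 1))
          * ∏ i : Fin m, (1 - q ^ (toMono m k i.succ - toMono m k i.castSucc))
        = (∏ i : Fin (m + 1), q ^ ((i : ℕ) * c (i : ℕ)))
          * (∏ t : Fin (m + 1), (q ^ C (t : ℕ)) ^ (k t))
          * ∏ i : Fin (m + 1), (1 - q ^ (k i + 1)) := by
          rw [mul_assoc _ (1 - q ^ (toMono m k 0 + 1)), h2]
          congr 2
          exact Finset.prod_congr rfl fun t _ => h1 t
      _ = ∏ i : Fin (m + 1), f i (k i) := by
          rw [← Finset.prod_mul_distrib, ← Finset.prod_mul_distrib]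
          exact Finset.prod_congr rfl fun i _ => by rw [hf]; ring
  -- summability of each factor
  have hfs : ∀ i : Fin (m + 1), Summable (fun k => ‖f i k‖) := by
    intro i
    have := (geomAux ⟨hq0, hq1⟩ (hx0 i) (hx1 i)).1
    have h := this.mul_left ‖q ^ ((i : ℕ) * c (i : ℕ))‖
    refine h.congr fun k => ?_
    rw [hf]
    simp [norm_mul, mul_assoc]
  -- value of each factor's sum
  have hqPR : ∀ i : Fin (m + 1),
      ∑' k : ℕ, f i k = q ^ ((i : ℕ) * c (i : ℕ)) * ((1 - q) / qPR q (q ^ C (i : ℕ)) 2) := by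
    intro i
    have hP : qPR q (q ^ C (i : ℕ)) 2
        = (1 - q ^ C (i : ℕ)) * (1 - q * q ^ C (i : ℕ)) := by
      simp [qPR, Finset.prod_range_succ]
    rw [hf, tsum_mul_left, (geomAux ⟨hq0, hq1⟩ (hx0 i) (hx1 i)).2, hP]
  obtain ⟨hSn, hT⟩ := piAux (m + 1) f hfs
  have hSum : Summable (fun k : Fin (m + 1) → ℕ => lhsTerm14 q m c (toMono m k)) := by
    refine (hSn.of_norm).congr fun k => (hpoint k).symm
  constructor
  · rw [← (monoEquiv m).summable_iff]
    exact hSum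
  · rw [← (monoEquiv m).tsum_eq]
    have : ∑' k : Fin (m + 1) → ℕ,
        lhsTerm14 q m c ((monoEquiv m k).1) = ∏ i : Fin (m + 1), ∑' k : ℕ, f i k := by
      rw [← hT]
      exact tsum_congr fun k => hpoint k
    rw [this]
    -- final algebra
    have hPpos : ∀ i : Fin (m + 1), 0 < qPR q (q ^ C (i : ℕ)) 2 := by
      intro i
      have hP : qPR q (q ^ C (i : ℕ)) 2
          = (1 - q ^ C (i : ℕ)) * (1 - q * q ^ C (i : ℕ)) := by
        simp [qPR, Finset.prod_range_succ]
      rw [hP]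
      have h0 := hx0 i
      have h1 := hx1 i
      have h2 : q * q ^ C (i : ℕ) < 1 := by nlinarith
      have : (0:ℝ) < 1 - q ^ C (i : ℕ) := by linarith
      have : (0:ℝ) < 1 - q * q ^ C (i : ℕ) := by linarith
      positivity
    rw [Finset.prod_congr rfl fun i _ => hqPR i]
    rw [Finset.prod_mul_distrib]
    have e1 : (∏ i : Fin (m + 1), q ^ ((i : ℕ) * c (i : ℕ)))
        = q ^ (∑ i ∈ Finset.range (m + 1), (i : ℝ) * c i) := by
      rw [rpow_finset_sum q hq0]
      exact (Fin.prod_univ_eq_prod_range (fun n => q ^ ((n : ℝ) * c n)) (m + 1)).symm ▸ rfl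
    have e2 : (∏ i : Fin (m + 1), ((1 - q) / qPR q (q ^ C (i : ℕ)) 2))
        = (1 - q) ^ (m + 1) / ∏ i : Fin (m + 1), qPR q (q ^ C (i : ℕ)) 2 := by
      rw [Finset.prod_div_distrib, Finset.prod_const]
      simp
    have e3 : (∏ i : Fin (m + 1), qPR q (q ^ C (i : ℕ)) 2)
        = ∏ i ∈ Finset.Icc 0 m, qPR q (q ^ (∑ t ∈ Finset.Icc i m, c t)) 2 := by
      rw [show Finset.Icc 0 m = Finset.range (m + 1) by ext x; simp]
      exact Fin.prod_univ_eq_prod_range (fun n => qPR q (q ^ C n) 2) (m + 1)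
    have hPne : (∏ i : Fin (m + 1), qPR q (q ^ C (i : ℕ)) 2) ≠ 0 :=
      ne_of_gt (Finset.prod_pos (fun i _ => hPpos i))
    have hqne : (1 - q) ≠ 0 := by nlinarith
    rw [e1, e2, ← e3]
    field_simp
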